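/- arXiv:1706.06670 — 2 statements merged into one kernel-verified Lean document; each statement's English description precedes it below -/
import Mathlib

section
/- Let Y0, Y1, Y2 be independent exponential random variables with rates 1, 1/n, 1/n, let T > 0, and set Z := |n(T∧(Y0) − T∧(Y0∧Y1)) − (n/2)(T∧Y0 − T∧(Y0∧Y1∧Y2))|. Then E[Z] ≥ (T/6)·(1 − exp(−(1+2/n)T/3))·(exp(−2T/3) − exp(−T)). In particular, liminf over n of E[Z] is at least (T/6)(1 − e^{−T/3})(e^{−2T/3} − e^{−T}) > 0. -/
open MeasureTheory ProbabilityTheory Real Filter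

open scoped ENNReal NNReal

/-- Padé inequality: `(2 - x) * exp x ≤ 2 + x` for `0 ≤ x`. -/
lemma my_pade {x : ℝ} (hx : 0 ≤ x) : (2 - x) * Real.exp x ≤ 2 + x := by
  have hmono : MonotoneOn (fun x : ℝ => 2 + x - (2 - x) * Real.exp x) (Set.Ici 0) := by
    have hder : ∀ y : ℝ, HasDerivAt (fun x : ℝ => 2 + x - (2 - x) * Real.exp x)
        (1 - (1 - y) * Real.exp y) y := by
      intro y
      have h1 : HasDerivAt (fun x : ℝ => (2 - x) * Real.exp x)
          ((-1) * Real.exp y + (2 - y) * Real.exp y) y :=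
        ((hasDerivAt_id y).const_sub 2).mul (Real.hasDerivAt_exp y)
      have h2 : HasDerivAt (fun x : ℝ => 2 + x) 1 y := (hasDerivAt_id y).const_add 2
      have := h2.sub h1
      exact this.congr_deriv (by ring)
    apply monotoneOn_of_deriv_nonneg (convex_Ici 0)
    · exact (Continuous.continuousOn (by continuity))
    · intro y hy
      exact (hder y).differentiableAt.differentiableWithinAt
    · intro y hy
      rw [(hder y).deriv]
      have h3 : (1 - y) * Real.exp y ≤ Real.exp (-y) * Real.exp y := by
        apply mul_le_mul_of_nonneg_right _ (Real.exp_pos y).le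
        linarith [Real.add_one_le_exp (-y)]
      rw [← Real.exp_add] at h3
      simp at h3
      linarith
  have h0 := hmono (Set.self_mem_Ici) (Set.mem_Ici.2 hx) hx
  simp only [Real.exp_zero] at h0
  linarith

/-- Key analytic inequality. -/
lemma my_key (n : ℕ) (hn : 1 ≤ n) {a : ℝ} (ha : 0 < a) :
    (a / 2) * (1 - Real.exp (-a)) ≤ (n : ℝ) * (a - n * (1 - Real.exp (-(a / n)))) := by
  have hnpos : (0 : ℝ) < n := by exact_mod_cast hn
  set x : ℝ := a / n with hxdef
  have hx : 0 < x := div_pos ha hnpos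
  have hxa : a = n * x := by rw [hxdef]; field_simp
  set E : ℝ := Real.exp (-x) with hE
  have hEpos : 0 < E := Real.exp_pos _
  -- Bernoulli
  have hber : 1 - Real.exp (-a) ≤ (n : ℝ) * (1 - E) := by
    have h1 : 1 + (n : ℝ) * (E - 1) ≤ (1 + (E - 1)) ^ n :=
      one_add_mul_le_pow (by nlinarith) n
    have h2 : (1 + (E - 1)) ^ n = Real.exp (-a) := by
      rw [add_sub_cancel, hE, ← Real.exp_nat_mul]
      congr 1
      rw [hxa]; ring
    rw [h2] at h1
    linarith
  -- Padé consequence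
  have hstep : (x / 2) * (1 - E) ≤ x - 1 + E := by
    have hp := my_pade hx.le
    have h3 : (2 - x) * Real.exp x * E ≤ (2 + x) * E :=
      mul_le_mul_of_nonneg_right hp hEpos.le
    have h4 : Real.exp x * E = 1 := by
      rw [hE, ← Real.exp_add]; simp
    have h5 : 2 - x ≤ (2 + x) * E := by nlinarith
    nlinarith
  calc (a / 2) * (1 - Real.exp (-a)) ≤ (a / 2) * ((n : ℝ) * (1 - E)) := by
        apply mul_le_mul_of_nonneg_left hber (by positivity)
    _ ≤ (n : ℝ) * (a - n * (1 - E)) := by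
        rw [hxa]
        nlinarith [mul_le_mul_of_nonneg_left hstep (show (0:ℝ) ≤ (n:ℝ) * n by positivity)]

lemma my_pdfReal_eq (r y : ℝ) :
    exponentialPDFReal r y = if 0 ≤ y then r * Real.exp (-(r * y)) else 0 := by
  rw [exponentialPDFReal, gammaPDFReal]
  simp only [rpow_one, Real.Gamma_one, div_one, sub_self, rpow_zero, mul_one]

lemma my_expMeasure_ac {r : ℝ} : expMeasure r ≪ (volume : Measure ℝ) :=
  withDensity_absolutelyContinuous _ _

lemma my_expMeasure_Iio_zero {r : ℝ} : expMeasure r (Set.Iio 0) = 0 := by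
  have : expMeasure r (Set.Iio 0) = ∫⁻ y in Set.Iio 0, exponentialPDF r y :=
    withDensity_apply _ measurableSet_Iio
  rw [this, lintegral_exponentialPDF_of_nonpos le_rfl]

lemma my_ae_nonneg {Ω : Type*} [MeasureSpace Ω] {X : Ω → ℝ} (hX : Measurable X) {r : ℝ}
    (hlaw : Measure.map X ℙ = expMeasure r) : ∀ᵐ ω, 0 ≤ X ω := by
  rw [ae_iff]
  have hset : {ω | ¬ 0 ≤ X ω} = X ⁻¹' (Set.Iio 0) := by
    ext ω; simp [not_le]
  rw [hset, ← Measure.map_apply hX measurableSet_Iio, hlaw, my_expMeasure_Iio_zero]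

lemma my_expMeasure_Ici {r : ℝ} (hr : 0 < r) {x : ℝ} (hx : 0 ≤ x) :
    (expMeasure r (Set.Ici x)).toReal = Real.exp (-(r * x)) := by
  haveI : IsProbabilityMeasure (expMeasure r) := isProbabilityMeasure_expMeasure hr
  have hIio : expMeasure r (Set.Iio x) = expMeasure r (Set.Iic x) := by
    refine le_antisymm (measure_mono Set.Iio_subset_Iic_self) ?_
    calc expMeasure r (Set.Iic x) = expMeasure r (Set.Iio x ∪ {x}) := by
          rw [Set.Iio_union_right]
      _ ≤ expMeasure r (Set.Iio x) + expMeasure r {x} := measure_union_le _ _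
      _ = expMeasure r (Set.Iio x) := by
          rw [my_expMeasure_ac (Real.volume_singleton), add_zero]
  have hIic : (expMeasure r (Set.Iic x)).toReal = 1 - Real.exp (-(r * x)) := by
    have h1 : cdf (expMeasure r) x = (expMeasure r (Set.Iic x)).toReal := by rw [cdf_eq_real]; rfl
    have h2 := cdf_expMeasure_eq hr x
    rw [← h1, h2, if_pos hx]
  rw [← Set.compl_Iio, prob_compl_eq_one_sub measurableSet_Iio, hIio,
    ENNReal.toReal_sub_of_le prob_le_one ENNReal.one_ne_top, hIic]
  simp

lemma my_integral_max {r a : ℝ} (hr : 0 < r) (ha : 0 < a) :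
    ∫ y, max (a - y) 0 ∂(expMeasure r) = a - (1 / r) * (1 - Real.exp (-(r * a))) := by
  have hmeas : Measurable fun y => (exponentialPDFReal r y).toNNReal :=
    (measurable_exponentialPDFReal r).real_toNNReal
  have hrw : expMeasure r
      = (volume : Measure ℝ).withDensity fun y => ((exponentialPDFReal r y).toNNReal : ℝ≥0∞) :=
    rfl
  rw [hrw, integral_withDensity_eq_integral_smul hmeas]
  have hfun : (fun y => (exponentialPDFReal r y).toNNReal • max (a - y) 0)
      = (Set.Icc 0 a).indicator (fun y => r * Real.exp (-(r * y)) * (a - y)) := by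
    funext y
    rw [NNReal.smul_def, Real.coe_toNNReal _ (exponentialPDFReal_nonneg hr y), my_pdfReal_eq]
    by_cases hy : y ∈ Set.Icc 0 a
    · rw [Set.indicator_of_mem hy, if_pos hy.1, max_eq_left (by linarith [hy.2]), smul_eq_mul]
    · rw [Set.indicator_of_notMem hy]
      rw [Set.mem_Icc, not_and_or, not_le, not_le] at hy
      rcases hy with hy | hy
      · rw [if_neg (not_le.2 hy), zero_smul]
      · rw [max_eq_right (by linarith), smul_zero]
  rw [hfun, integral_indicator measurableSet_Icc, integral_Icc_eq_integral_Ioc,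
    ← intervalIntegral.integral_of_le ha.le]
  have hftc : ∫ y in (0)..a, r * Real.exp (-(r * y)) * (a - y)
      = (fun y => ((1 - r * a) / r + y) * Real.exp (-(r * y))) a
        - (fun y => ((1 - r * a) / r + y) * Real.exp (-(r * y))) 0 := by
    refine intervalIntegral.integral_eq_sub_of_hasDerivAt
        (f := fun y => ((1 - r * a) / r + y) * Real.exp (-(r * y))) ?_ ?_
    · intro y _
      have hexp : HasDerivAt (fun y : ℝ => Real.exp (-(r * y))) ((-r) * Real.exp (-(r * y))) y := by
        have h1 : HasDerivAt (fun y : ℝ => r * y) (r * 1) y := (hasDerivAt_id y).const_mul r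
        have h2 := (h1.neg).exp
        exact h2.congr_deriv (by simp only [Pi.neg_apply]; ring)
      have hlin : HasDerivAt (fun y : ℝ => (1 - r * a) / r + y) 1 y :=
        (hasDerivAt_id y).const_add _
      have := hlin.mul hexp
      exact this.congr_deriv (by field_simp; ring)
    · apply Continuous.intervalIntegrable
      continuity
  rw [hftc]
  simp only []
  rw [mul_zero, neg_zero, Real.exp_zero]
  field_simp
  ring

lemma my_ar1 {N m y1 t : ℝ} (hN : 0 ≤ N) (hy1 : 0 ≤ y1) (h1 : y1 ≤ t / 3) (hm : 2 * t / 3 ≤ m) :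
    (t / 3 - y1) * N ≤ |N * (m - y1) - N / 2 * (m - y1)| := by
  rw [abs_of_nonneg (by nlinarith)]
  nlinarith

lemma my_ar2 {N m y1 y2 t : ℝ} (hN : 0 ≤ N) (hy2 : 0 ≤ y2) (h1 : y1 ≤ t / 3)
    (hm : 2 * t / 3 ≤ m) :
    (t / 3 - y1) * N ≤ |N * (m - y1) - N / 2 * (m - y2)| := by
  rw [abs_of_nonneg (by nlinarith)]
  nlinarith

lemma my_arB {N a b c t : ℝ} (hN : 0 ≤ N) (ha : 0 ≤ a) (ha' : a ≤ t) (hb : 0 ≤ b) (hb' : b ≤ t)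
    (hc : 0 ≤ c) (hc' : c ≤ t) :
    |N * (a - b) - N / 2 * (a - c)| ≤ N * t + N / 2 * t := by
  rw [abs_le]
  constructor <;> nlinarith

lemma my_quad {x : ℝ} (hx : 0 ≤ x) : Real.exp (-x) ≤ 1 - x + x ^ 2 / 2 := by
  have hmono : MonotoneOn (fun x : ℝ => 1 - x + x ^ 2 / 2 - Real.exp (-x)) (Set.Ici 0) := by
    have hder : ∀ y : ℝ, HasDerivAt (fun x : ℝ => 1 - x + x ^ 2 / 2 - Real.exp (-x))
        (-1 + y + Real.exp (-y)) y := by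
      intro y
      have h1 : HasDerivAt (fun x : ℝ => Real.exp (-x)) (-Real.exp (-y)) y := by
        have h2 := ((hasDerivAt_id y).neg).exp
        exact h2.congr_deriv (by simp)
      have h3 : HasDerivAt (fun x : ℝ => 1 - x + x ^ 2 / 2) (-1 + y) y := by
        have h4 : HasDerivAt (fun x : ℝ => x ^ 2 / 2) (y) y := by
          have := (hasDerivAt_pow 2 y).div_const 2
          exact this.congr_deriv (by norm_num)
        have h5 : HasDerivAt (fun x : ℝ => 1 - x) (-1) y := (hasDerivAt_id y).const_sub 1
        exact h5.add h4
      have := h3.sub h1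
      exact this.congr_deriv (by ring)
    apply monotoneOn_of_deriv_nonneg (convex_Ici 0)
    · exact Continuous.continuousOn (by continuity)
    · intro y hy
      exact (hder y).differentiableAt.differentiableWithinAt
    · intro y hy
      rw [(hder y).deriv]
      have := Real.add_one_le_exp (-y)
      have hy0 : 0 ≤ y := le_of_lt (by simpa using hy)
      nlinarith [Real.exp_pos (-y)]
  have h0 := hmono (Set.self_mem_Ici) (Set.mem_Ici.2 hx) hx
  simp only [Real.exp_zero] at h0
  norm_num at h0
  linarith

lemma my_d1 {t y0 y1 : ℝ} (h1 : 0 ≤ y1) :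
    min t y0 - min t (min y0 y1) ≤ max (t - y1) 0 := by
  rcases le_total y0 y1 with h | h
  · rw [min_eq_left h]
    simp [le_max_right]
  · rw [min_eq_right h]
    rcases le_total t y1 with h2 | h2
    · rw [min_eq_left h2]
      linarith [min_le_left t y0, le_max_right (t - y1) 0]
    · rw [min_eq_right h2]
      linarith [min_le_left t y0, le_max_left (t - y1) 0]

lemma my_d2 {t y0 y1 y2 : ℝ} (h1 : 0 ≤ y1) (h2 : 0 ≤ y2) :
    min t y0 - min t (min y0 (min y1 y2)) ≤ max (t - y1) 0 + max (t - y2) 0 := by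
  rcases le_total y1 y2 with h | h
  · rw [min_eq_left h]
    have := my_d1 (t := t) (y0 := y0) h1
    linarith [le_max_right (t - y2) 0]
  · rw [min_eq_right h]
    have := my_d1 (t := t) (y0 := y0) h2
    linarith [le_max_right (t - y1) 0]

lemma my_ub (n : ℕ) (hn : 1 ≤ n) {t : ℝ} (ht : 0 < t) :
    2 * (n : ℝ) * (t - n * (1 - Real.exp (-(t / n)))) ≤ t ^ 2 := by
  have hnpos : (0 : ℝ) < n := by exact_mod_cast hn
  set x : ℝ := t / n with hxdef
  have hx : 0 < x := div_pos ht hnpos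
  have hxa : t = n * x := by rw [hxdef]; field_simp
  have hq := my_quad hx.le
  nlinarith [mul_le_mul_of_nonneg_left hq (show (0:ℝ) ≤ 2 * (n:ℝ) * n by positivity)]

set_option maxHeartbeats 1000000

/-- For each `n`, let `Y0 n, Y1 n, Y2 n` be independent exponential random variables with rates
`1, 1/n, 1/n` and let
`Z n = |n (T∧Y0 − T∧(Y0∧Y1)) − (n/2) (T∧Y0 − T∧(Y0∧Y1∧Y2))|`.
Then `E[Z n]` is bounded below by the explicit constant, the liminf of `E[Z n]` over `n` is at
least `(T/6)(1 − e^{−T/3})(e^{−2T/3} − e^{−T})`, and this lower bound is positive. -/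
theorem stmt1 {Ω : Type*} [MeasureSpace Ω] [IsProbabilityMeasure (ℙ : Measure Ω)]
    (T : ℝ) (hT : 0 < T)
    (Y0 Y1 Y2 : ℕ → Ω → ℝ)
    (hm0 : ∀ n, Measurable (Y0 n)) (hm1 : ∀ n, Measurable (Y1 n))
    (hm2 : ∀ n, Measurable (Y2 n))
    (law0 : ∀ n, 1 ≤ n → Measure.map (Y0 n) ℙ = expMeasure 1)
    (law1 : ∀ n, 1 ≤ n → Measure.map (Y1 n) ℙ = expMeasure (1 / (n : ℝ)))
    (law2 : ∀ n, 1 ≤ n → Measure.map (Y2 n) ℙ = expMeasure (1 / (n : ℝ)))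
    (hind : ∀ n, 1 ≤ n →
      iIndepFun
        ![Y0 n, Y1 n, Y2 n] ℙ)
    (Z : ℕ → Ω → ℝ)
    (hZ : ∀ n ω, Z n ω =
      |(n : ℝ) * (min T (Y0 n ω) - min T (min (Y0 n ω) (Y1 n ω)))
        - ((n : ℝ) / 2) * (min T (Y0 n ω)
            - min T (min (Y0 n ω) (min (Y1 n ω) (Y2 n ω))))|) :
    (∀ n : ℕ, 1 ≤ n →
      (T / 6) * (1 - exp (-(1 + 2 / (n : ℝ)) * (T / 3)))
          * (exp (-(2 * T / 3)) - exp (-T))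
        ≤ ∫ ω, Z n ω ∂ℙ)
    ∧ (T / 6) * (1 - exp (-(T / 3))) * (exp (-(2 * T / 3)) - exp (-T))
        ≤ liminf (fun n => ∫ ω, Z n ω ∂ℙ) atTop
    ∧ 0 < (T / 6) * (1 - exp (-(T / 3))) * (exp (-(2 * T / 3)) - exp (-T)) := by
  have hC : 0 < Real.exp (-(2 * T / 3)) - Real.exp (-T) := by
    have := Real.exp_lt_exp.2 (show -T < -(2 * T / 3) by linarith)
    linarith
  have hE13 : Real.exp (-(T / 3)) < 1 := by
    have := Real.exp_lt_exp.2 (show -(T / 3) < 0 by linarith)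
    simpa using this
  have hpos : 0 < (T / 6) * (1 - exp (-(T / 3))) * (exp (-(2 * T / 3)) - exp (-T)) :=
    mul_pos (mul_pos (by linarith) (by linarith)) hC
  have main : ∀ n : ℕ, 1 ≤ n →
      (T / 6) * (1 - exp (-(1 + 2 / (n : ℝ)) * (T / 3)))
          * (exp (-(2 * T / 3)) - exp (-T)) ≤ ∫ ω, Z n ω ∂ℙ := by
    intro n hn
    have hn0 : (0 : ℝ) < n := by exact_mod_cast hn
    have hr : (0 : ℝ) < 1 / (n : ℝ) := by positivity
    have h0 := my_ae_nonneg (hm0 n) (law0 n hn)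
    have h1 := my_ae_nonneg (hm1 n) (law1 n hn)
    have h2 := my_ae_nonneg (hm2 n) (law2 n hn)
    have hZeq : Z n = fun ω => |(n : ℝ) * (min T (Y0 n ω) - min T (min (Y0 n ω) (Y1 n ω)))
        - ((n : ℝ) / 2) * (min T (Y0 n ω)
            - min T (min (Y0 n ω) (min (Y1 n ω) (Y2 n ω))))| := funext (hZ n)
    have hZmeas : Measurable (Z n) := by
      rw [hZeq]; fun_prop
    set f1 : ℝ → ℝ := fun y => max (T / 3 - y) 0 with hf1def
    set f0 : ℝ → ℝ := (Set.Ici (2 * T / 3)).indicator (fun _ => (n : ℝ)) with hf0def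
    have hf1m : Measurable f1 := (measurable_const.sub measurable_id).max measurable_const
    have hf0m : Measurable f0 := measurable_const.indicator measurableSet_Ici
    have hf1nonneg : ∀ y, 0 ≤ f1 y := fun y => le_max_right _ _
    -- the a.e. pointwise bound
    have hWle : (fun ω => f1 (Y1 n ω) * f0 (Y0 n ω)) ≤ᵐ[ℙ] Z n := by
      filter_upwards [h0, h1, h2] with ω hw0 hw1 hw2
      rw [hZ n ω]
      by_cases hY0 : 2 * T / 3 ≤ Y0 n ω
      · have hf0v : f0 (Y0 n ω) = n := Set.indicator_of_mem (Set.mem_Ici.2 hY0) _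
        by_cases hY1 : T / 3 ≤ Y1 n ω
        · have hv : f1 (Y1 n ω) = 0 := max_eq_right (by linarith)
          rw [hv, hf0v, zero_mul]
          exact abs_nonneg _
        · push_neg at hY1
          have hf1v : f1 (Y1 n ω) = T / 3 - Y1 n ω := max_eq_left (by linarith)
          rw [hf1v, hf0v]
          have hmin1 : min T (min (Y0 n ω) (Y1 n ω)) = Y1 n ω := by
            rw [min_eq_right (show Y1 n ω ≤ Y0 n ω by linarith),
              min_eq_right (show Y1 n ω ≤ T by linarith)]
          have hmT : 2 * T / 3 ≤ min T (Y0 n ω) := le_min (by linarith) hY0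
          have hmT2 : min T (Y0 n ω) ≤ T := min_le_left _ _
          rcases le_total (Y1 n ω) (Y2 n ω) with hc | hc
          · have hmin2 : min T (min (Y0 n ω) (min (Y1 n ω) (Y2 n ω))) = Y1 n ω := by
              rw [min_eq_left hc, min_eq_right (show Y1 n ω ≤ Y0 n ω by linarith),
                min_eq_right (show Y1 n ω ≤ T by linarith)]
            rw [hmin1, hmin2]
            exact my_ar1 hn0.le hw1 hY1.le hmT
          · have hmin2 : min T (min (Y0 n ω) (min (Y1 n ω) (Y2 n ω))) = Y2 n ω := by
              rw [min_eq_right hc, min_eq_right (show Y2 n ω ≤ Y0 n ω by linarith),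
                min_eq_right (show Y2 n ω ≤ T by linarith)]
            rw [hmin1, hmin2]
            exact my_ar2 hn0.le hw2 hY1.le hmT
      · have hf0v : f0 (Y0 n ω) = 0 :=
          Set.indicator_of_notMem (by simpa [Set.mem_Ici] using hY0) _
        rw [hf0v, mul_zero]
        exact abs_nonneg _
    -- integrability
    have hZint : Integrable (Z n) := by
      apply Integrable.mono' (integrable_const ((n : ℝ) * T + (n : ℝ) / 2 * T))
        hZmeas.aestronglyMeasurable
      filter_upwards [h0, h1, h2] with ω hw0 hw1 hw2
      rw [hZ n ω, Real.norm_eq_abs, abs_abs]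
      have b1 : 0 ≤ min T (Y0 n ω) := le_min hT.le hw0
      have b2 : min T (Y0 n ω) ≤ T := min_le_left _ _
      have b3 : 0 ≤ min T (min (Y0 n ω) (Y1 n ω)) := le_min hT.le (le_min hw0 hw1)
      have b4 : min T (min (Y0 n ω) (Y1 n ω)) ≤ T := min_le_left _ _
      have b5 : 0 ≤ min T (min (Y0 n ω) (min (Y1 n ω) (Y2 n ω))) :=
        le_min hT.le (le_min hw0 (le_min hw1 hw2))
      have b6 : min T (min (Y0 n ω) (min (Y1 n ω) (Y2 n ω))) ≤ T := min_le_left _ _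
      exact my_arB hn0.le b1 b2 b3 b4 b5 b6
    have hf1Y1int : Integrable (fun ω => f1 (Y1 n ω)) := by
      apply Integrable.mono' (integrable_const (T / 3))
        ((hf1m.comp (hm1 n)).aestronglyMeasurable)
      filter_upwards [h1] with ω hw
      show ‖f1 (Y1 n ω)‖ ≤ T / 3
      rw [Real.norm_eq_abs, abs_of_nonneg (hf1nonneg _)]
      exact max_le (by linarith) (by linarith)
    have hf0bound : ∀ x : ℝ, |f0 x| ≤ (n : ℝ) := by
      intro x
      by_cases hmem : x ∈ Set.Ici (2 * T / 3)
      · have hv : f0 x = n := Set.indicator_of_mem hmem _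
        rw [hv, abs_of_nonneg hn0.le]
      · have hv : f0 x = 0 := Set.indicator_of_notMem hmem _
        rw [hv, abs_zero]
        exact hn0.le
    have hf0Y0int : Integrable (fun ω => f0 (Y0 n ω)) := by
      apply Integrable.mono' (integrable_const ((n : ℝ)))
        ((hf0m.comp (hm0 n)).aestronglyMeasurable)
      filter_upwards with ω
      show ‖f0 (Y0 n ω)‖ ≤ (n : ℝ)
      rw [Real.norm_eq_abs]
      exact hf0bound _
    have hWint : Integrable (fun ω => f1 (Y1 n ω) * f0 (Y0 n ω)) := by
      apply Integrable.mono' (integrable_const (T / 3 * (n : ℝ)))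
        (((hf1m.comp (hm1 n)).mul (hf0m.comp (hm0 n))).aestronglyMeasurable)
      filter_upwards [h1] with ω hw
      show ‖f1 (Y1 n ω) * f0 (Y0 n ω)‖ ≤ T / 3 * (n : ℝ)
      rw [Real.norm_eq_abs, abs_mul]
      apply mul_le_mul
      · rw [abs_of_nonneg (hf1nonneg _)]
        exact max_le (by linarith) (by linarith)
      · exact hf0bound _
      · exact abs_nonneg _
      · linarith
    -- independence
    have hIndep : IndepFun (fun ω => f1 (Y1 n ω)) (fun ω => f0 (Y0 n ω)) ℙ := by
      have h := (hind n hn).indepFun (show (1 : Fin 3) ≠ (0 : Fin 3) by decide)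
      simp only [Matrix.cons_val_one, Matrix.head_cons, Matrix.cons_val_zero] at h
      exact h.comp hf1m hf0m
    have hprod : ∫ ω, f1 (Y1 n ω) * f0 (Y0 n ω) ∂ℙ
        = (∫ ω, f1 (Y1 n ω) ∂ℙ) * ∫ ω, f0 (Y0 n ω) ∂ℙ := by
      have := hIndep.integral_mul_eq_mul_integral hf1Y1int.aestronglyMeasurable hf0Y0int.aestronglyMeasurable
      simpa [Pi.mul_apply] using this
    have hi1 : ∫ ω, f1 (Y1 n ω) ∂ℙ
        = T / 3 - (n : ℝ) * (1 - Real.exp (-(T / 3 / (n : ℝ)))) := by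
      rw [← integral_map (hm1 n).aemeasurable hf1m.aestronglyMeasurable, law1 n hn,
        my_integral_max hr (show (0:ℝ) < T / 3 by linarith)]
      rw [one_div_one_div]
      congr 3
      ring
    have hi0 : ∫ ω, f0 (Y0 n ω) ∂ℙ = (n : ℝ) * Real.exp (-(2 * T / 3)) := by
      rw [← integral_map (hm0 n).aemeasurable hf0m.aestronglyMeasurable, law0 n hn, hf0def,
        integral_indicator_const _ measurableSet_Ici, smul_eq_mul, measureReal_def,
        my_expMeasure_Ici one_pos (show (0:ℝ) ≤ 2 * T / 3 by linarith)]
      rw [one_mul, mul_comm]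
    have hle : ∫ ω, f1 (Y1 n ω) * f0 (Y0 n ω) ∂ℙ ≤ ∫ ω, Z n ω ∂ℙ :=
      integral_mono_ae hWint hZint hWle
    rw [hprod, hi1, hi0] at hle
    refine le_trans ?_ hle
    have hkey := my_key n hn (show (0:ℝ) < T / 3 by linarith)
    have hsplit : Real.exp (-T) = Real.exp (-(2 * T / 3)) * Real.exp (-(T / 3)) := by
      rw [← Real.exp_add]; ring_nf
    have hfac1 : 1 - Real.exp (-(1 + 2 / (n : ℝ)) * (T / 3)) ≤ 1 := by
      linarith [Real.exp_pos (-(1 + 2 / (n : ℝ)) * (T / 3))]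
    calc (T / 6) * (1 - exp (-(1 + 2 / (n : ℝ)) * (T / 3)))
          * (exp (-(2 * T / 3)) - exp (-T))
        ≤ (T / 6) * 1 * (exp (-(2 * T / 3)) - exp (-T)) :=
          mul_le_mul_of_nonneg_right (mul_le_mul_of_nonneg_left hfac1 (by linarith)) hC.le
      _ = (T / 3 / 2) * (1 - exp (-(T / 3))) * exp (-(2 * T / 3)) := by
          rw [hsplit]; ring
      _ ≤ ((n : ℝ) * (T / 3 - (n : ℝ) * (1 - Real.exp (-(T / 3 / (n : ℝ))))))
            * exp (-(2 * T / 3)) :=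
          mul_le_mul_of_nonneg_right hkey (Real.exp_nonneg _)
      _ = (T / 3 - (n : ℝ) * (1 - Real.exp (-(T / 3 / (n : ℝ)))))
            * ((n : ℝ) * exp (-(2 * T / 3))) := by ring
  -- uniform upper bound, for coboundedness
  have hub : ∀ n : ℕ, 1 ≤ n → ∫ ω, Z n ω ∂ℙ ≤ T ^ 2 := by
    intro n hn
    have hn0 : (0 : ℝ) < n := by exact_mod_cast hn
    have hr : (0 : ℝ) < 1 / (n : ℝ) := by positivity
    have h0 := my_ae_nonneg (hm0 n) (law0 n hn)
    have h1 := my_ae_nonneg (hm1 n) (law1 n hn)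
    have h2 := my_ae_nonneg (hm2 n) (law2 n hn)
    have hZeq : Z n = fun ω => |(n : ℝ) * (min T (Y0 n ω) - min T (min (Y0 n ω) (Y1 n ω)))
        - ((n : ℝ) / 2) * (min T (Y0 n ω)
            - min T (min (Y0 n ω) (min (Y1 n ω) (Y2 n ω))))| := funext (hZ n)
    have hZmeas : Measurable (Z n) := by
      rw [hZeq]; fun_prop
    have hZint : Integrable (Z n) := by
      apply Integrable.mono' (integrable_const ((n : ℝ) * T + (n : ℝ) / 2 * T))
        hZmeas.aestronglyMeasurable
      filter_upwards [h0, h1, h2] with ω hw0 hw1 hw2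
      rw [hZ n ω, Real.norm_eq_abs, abs_abs]
      have b1 : 0 ≤ min T (Y0 n ω) := le_min hT.le hw0
      have b2 : min T (Y0 n ω) ≤ T := min_le_left _ _
      have b3 : 0 ≤ min T (min (Y0 n ω) (Y1 n ω)) := le_min hT.le (le_min hw0 hw1)
      have b4 : min T (min (Y0 n ω) (Y1 n ω)) ≤ T := min_le_left _ _
      have b5 : 0 ≤ min T (min (Y0 n ω) (min (Y1 n ω) (Y2 n ω))) :=
        le_min hT.le (le_min hw0 (le_min hw1 hw2))
      have b6 : min T (min (Y0 n ω) (min (Y1 n ω) (Y2 n ω))) ≤ T := min_le_left _ _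
      exact my_arB hn0.le b1 b2 b3 b4 b5 b6
    have hg1int : Integrable (fun ω => max (T - Y1 n ω) 0) := by
      apply Integrable.mono' (integrable_const T)
        (((measurable_const.sub (hm1 n)).max measurable_const).aestronglyMeasurable)
      filter_upwards [h1] with ω hw
      rw [Real.norm_eq_abs, abs_of_nonneg (le_max_right _ _)]
      exact max_le (by show T - Y1 n ω ≤ T; linarith) (by linarith)
    have hg2int : Integrable (fun ω => max (T - Y2 n ω) 0) := by
      apply Integrable.mono' (integrable_const T)
        (((measurable_const.sub (hm2 n)).max measurable_const).aestronglyMeasurable)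
      filter_upwards [h2] with ω hw
      rw [Real.norm_eq_abs, abs_of_nonneg (le_max_right _ _)]
      exact max_le (by show T - Y2 n ω ≤ T; linarith) (by linarith)
    have hGint : Integrable (fun ω => 3 * (n : ℝ) / 2 * max (T - Y1 n ω) 0
        + (n : ℝ) / 2 * max (T - Y2 n ω) 0) :=
      (hg1int.const_mul _).add (hg2int.const_mul _)
    have hle : Z n ≤ᵐ[ℙ] fun ω => 3 * (n : ℝ) / 2 * max (T - Y1 n ω) 0
        + (n : ℝ) / 2 * max (T - Y2 n ω) 0 := by
      filter_upwards [h0, h1, h2] with ω hw0 hw1 hw2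
      rw [hZ n ω]
      have hd1 := my_d1 (t := T) (y0 := Y0 n ω) hw1
      have hd2 := my_d2 (t := T) (y0 := Y0 n ω) hw1 hw2
      have hd1' : 0 ≤ min T (Y0 n ω) - min T (min (Y0 n ω) (Y1 n ω)) :=
        sub_nonneg.2 (min_le_min le_rfl (min_le_left _ _))
      have hd2' : 0 ≤ min T (Y0 n ω) - min T (min (Y0 n ω) (min (Y1 n ω) (Y2 n ω))) :=
        sub_nonneg.2 (min_le_min le_rfl (min_le_left _ _))
      rw [abs_le]
      constructor
      · nlinarith [mul_le_mul_of_nonneg_left hd2 (show (0:ℝ) ≤ (n:ℝ)/2 by positivity),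
          mul_nonneg hn0.le hd1', le_max_right (T - Y1 n ω) 0, le_max_right (T - Y2 n ω) 0,
          mul_nonneg hn0.le (le_max_right (T - Y1 n ω) 0)]
      · nlinarith [mul_le_mul_of_nonneg_left hd1 hn0.le,
          mul_nonneg (show (0:ℝ) ≤ (n:ℝ)/2 by positivity) hd2',
          mul_nonneg hn0.le (le_max_right (T - Y2 n ω) 0)]
    have hmax1 : ∫ ω, max (T - Y1 n ω) 0 ∂ℙ
        = T - (n : ℝ) * (1 - Real.exp (-(T / (n : ℝ)))) := by
      rw [← integral_map (hm1 n).aemeasurable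
        ((show Measurable fun y : ℝ => max (T - y) 0 from
          (measurable_const.sub measurable_id).max measurable_const).aestronglyMeasurable),
        law1 n hn, my_integral_max hr hT, one_div_one_div]
      congr 3
      ring
    have hmax2 : ∫ ω, max (T - Y2 n ω) 0 ∂ℙ
        = T - (n : ℝ) * (1 - Real.exp (-(T / (n : ℝ)))) := by
      rw [← integral_map (hm2 n).aemeasurable
        ((show Measurable fun y : ℝ => max (T - y) 0 from
          (measurable_const.sub measurable_id).max measurable_const).aestronglyMeasurable),
        law2 n hn, my_integral_max hr hT, one_div_one_div]
      congr 3
      ring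
    calc ∫ ω, Z n ω ∂ℙ
        ≤ ∫ ω, (3 * (n : ℝ) / 2 * max (T - Y1 n ω) 0
            + (n : ℝ) / 2 * max (T - Y2 n ω) 0) ∂ℙ := integral_mono_ae hZint hGint hle
      _ = 3 * (n : ℝ) / 2 * (∫ ω, max (T - Y1 n ω) 0 ∂ℙ)
            + (n : ℝ) / 2 * ∫ ω, max (T - Y2 n ω) 0 ∂ℙ := by
          rw [integral_add (hg1int.const_mul _) (hg2int.const_mul _),
            integral_const_mul, integral_const_mul]
      _ = 2 * (n : ℝ) * (T - (n : ℝ) * (1 - Real.exp (-(T / (n : ℝ))))) := by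
          rw [hmax1, hmax2]; ring
      _ ≤ T ^ 2 := my_ub n hn hT
  refine ⟨main, ?_, hpos⟩
  have hev : ∀ᶠ n in atTop,
      (T / 6) * (1 - exp (-(T / 3))) * (exp (-(2 * T / 3)) - exp (-T)) ≤ ∫ ω, Z n ω ∂ℙ := by
    filter_upwards [eventually_ge_atTop 1] with n hn
    refine le_trans ?_ (main n hn)
    have hexp : Real.exp (-(1 + 2 / (n : ℝ)) * (T / 3)) ≤ Real.exp (-(T / 3)) := by
      apply Real.exp_le_exp.2
      have h2n : 0 ≤ 2 / (n : ℝ) := by positivity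
      nlinarith
    have hfac : 1 - exp (-(T / 3)) ≤ 1 - exp (-(1 + 2 / (n : ℝ)) * (T / 3)) := by linarith
    exact mul_le_mul_of_nonneg_right
      (mul_le_mul_of_nonneg_left hfac (by linarith : (0:ℝ) ≤ T / 6)) hC.le
  have hcob : IsCoboundedUnder (· ≥ ·) atTop (fun n => ∫ ω, Z n ω ∂ℙ) := by
    apply isCoboundedUnder_ge_of_eventually_le atTop (x := T ^ 2)
    filter_upwards [eventually_ge_atTop 1] with n hn
    exact hub n hn
  exact le_liminf_of_le hcob hev
end

section
/- There exists a family of random variables (Z_n) (namely Z_n = 1 + n·(T∧τ¹ − T∧τ^{1+1/n}) from the state-dependent switching counterexample, with τ-times given by minima of independent exponentials) such that (Z_n) is not Cauchy in L¹; hence the difference quotients of the state-dependent switching solution do not converge in L¹. -/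
open MeasureTheory ProbabilityTheory Real Filter

lemma expMeasure_Iic_toReal {r : ℝ} (hr : 0 < r) {x : ℝ} (hx : 0 ≤ x) :
    ((expMeasure r) (Set.Iic x)).toReal = 1 - Real.exp (-(r * x)) := by
  have := isProbabilityMeasure_expMeasure hr
  rw [← measureReal_def, ← cdf_eq_real]
  have h := cdf_expMeasure_eq hr x
  rw [h, if_pos hx]

lemma expMeasure_Iio_zero (r : ℝ) : (expMeasure r) (Set.Iio 0) = 0 := by
  show (MeasureTheory.volume.withDensity (gammaPDF 1 r)) (Set.Iio 0) = 0
  rw [withDensity_apply _ measurableSet_Iio]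
  have : ∀ x ∈ Set.Iio (0:ℝ), gammaPDF 1 r x = 0 := fun x hx => gammaPDF_of_neg hx
  rw [setLIntegral_congr_fun_ae measurableSet_Iio (MeasureTheory.ae_of_all _ this)]
  simp

set_option maxHeartbeats 2000000 in
/-- The family `Z n = 1 + n (T∧τ¹ − T∧τ^{1+1/n})`, where `τ¹ = Y0 n` and
`τ^{1+1/n} = Y0 n ∧ Y1 n` for independent exponential random variables `Y0 n, Y1 n, Y2 n`
with rates `1, 1/n, 1/n`, is not Cauchy in `L¹`; hence the difference quotients of the
state-dependent switching solution do not converge in `L¹`. -/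
theorem stmt2 {Ω : Type*} [MeasureSpace Ω] [IsProbabilityMeasure (ℙ : Measure Ω)]
    (T : ℝ) (hT : 0 < T)
    (Y0 Y1 Y2 : ℕ → Ω → ℝ)
    (hm0 : ∀ n, Measurable (Y0 n)) (hm1 : ∀ n, Measurable (Y1 n))
    (hm2 : ∀ n, Measurable (Y2 n))
    (law0 : ∀ n : ℕ, 1 ≤ n → Measure.map (Y0 n) ℙ = expMeasure 1)
    (law1 : ∀ n : ℕ, 1 ≤ n → Measure.map (Y1 n) ℙ = expMeasure (1 / (n : ℝ)))
    (law2 : ∀ n : ℕ, 1 ≤ n → Measure.map (Y2 n) ℙ = expMeasure (1 / (n : ℝ)))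
    (hind : ∀ n : ℕ, 1 ≤ n →
      iIndepFun
        ![Y0 n, Y1 n, Y2 n] ℙ)
    (Z : ℕ → Ω → ℝ)
    (hZ : ∀ (n : ℕ) ω, Z n ω =
      1 + (n : ℝ) * (min T (Y0 n ω) - min T (min (Y0 n ω) (Y1 n ω)))) :
    ¬ (∀ ε : ℝ, 0 < ε → ∃ N : ℕ, ∀ m ≥ N, ∀ k ≥ N,
        ∫ ω, |Z m ω - Z k ω| ∂ℙ < ε) := by
  intro h
  set t : ℝ := min T 1 with ht_def
  have ht0 : 0 < t := lt_min hT one_pos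
  have ht1 : t ≤ 1 := min_le_right _ _
  have htT : t ≤ T := min_le_left _ _
  set c : ℝ := t^2 * Real.exp (-t) / 8 with hc_def
  have hc : 0 < c := by positivity
  obtain ⟨N, hN⟩ := h (c/2) (by positivity)
  set k : ℕ := max N 1 with hk_def
  have hk1 : 1 ≤ k := le_max_right _ _
  have hkN : N ≤ k := le_max_left _ _
  have hk0 : (0:ℝ) < k := by exact_mod_cast hk1
  obtain ⟨m, hmbig, hm1', hmN⟩ : ∃ m : ℕ, 2*(k:ℝ)*T^2/c ≤ m ∧ 1 ≤ m ∧ N ≤ m := by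
    obtain ⟨m, hm⟩ := exists_nat_ge (max (2*(k:ℝ)*T^2/c) (max (1:ℝ) (N:ℝ)))
    refine ⟨m, le_trans (le_max_left _ _) hm, ?_, ?_⟩
    · exact_mod_cast le_trans (le_trans (le_max_left _ _) (le_max_right _ _)) hm
    · exact_mod_cast le_trans (le_trans (le_max_right _ _) (le_max_right _ _)) hm
  have hm0' : (0:ℝ) < m := by exact_mod_cast hm1'
  have hm1R : (1:ℝ) ≤ m := by exact_mod_cast hm1'
  have hN' := hN m hmN k hkN
  -- generic law facts
  have law_Iic : ∀ (Y : Ω → ℝ) (r : ℝ), Measurable Y → Measure.map Y ℙ = expMeasure r → 0 < r →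
      ∀ x : ℝ, 0 ≤ x → (ℙ (Y ⁻¹' Set.Iic x)).toReal = 1 - Real.exp (-(r*x)) := by
    intro Y r hm hlaw hr x hx
    rw [← Measure.map_apply hm measurableSet_Iic, hlaw, expMeasure_Iic_toReal hr hx]
  have law_Ioi : ∀ (Y : Ω → ℝ) (r : ℝ), Measurable Y → Measure.map Y ℙ = expMeasure r → 0 < r →
      ∀ x : ℝ, 0 ≤ x → (ℙ (Y ⁻¹' Set.Ioi x)).toReal = Real.exp (-(r*x)) := by
    intro Y r hm hlaw hr x hx
    have hcompl : (Y ⁻¹' Set.Iic x)ᶜ = Y ⁻¹' Set.Ioi x := by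
      ext ω; simp [not_le]
    have h2 := measure_add_measure_compl (μ := ℙ) (s := Y ⁻¹' Set.Iic x) (hm measurableSet_Iic)
    rw [hcompl, measure_univ] at h2
    have h3 := congrArg ENNReal.toReal h2
    rw [ENNReal.toReal_add (measure_ne_top _ _) (measure_ne_top _ _), ENNReal.toReal_one,
      law_Iic Y r hm hlaw hr x hx] at h3
    linarith
  have law_nonneg : ∀ (Y : Ω → ℝ) (r : ℝ), Measurable Y → Measure.map Y ℙ = expMeasure r →
      ∀ᵐ ω ∂ℙ, 0 ≤ Y ω := by
    intro Y r hm hlaw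
    have hz : ℙ (Y ⁻¹' Set.Iio 0) = 0 := by
      rw [← Measure.map_apply hm measurableSet_Iio, hlaw, expMeasure_Iio_zero]
    have := measure_eq_zero_iff_ae_notMem.mp hz
    filter_upwards [this] with ω hω
    simp only [Set.mem_preimage, Set.mem_Iio] at hω
    exact not_lt.mp hω
  -- a.e. nonnegativity
  have hae : ∀ᵐ ω ∂ℙ, 0 ≤ Y0 m ω ∧ 0 ≤ Y1 m ω ∧ 0 ≤ Y0 k ω ∧ 0 ≤ Y1 k ω := by
    filter_upwards [law_nonneg (Y0 m) 1 (hm0 m) (law0 m hm1'),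
      law_nonneg (Y1 m) (1/(m:ℝ)) (hm1 m) (law1 m hm1'),
      law_nonneg (Y0 k) 1 (hm0 k) (law0 k hk1),
      law_nonneg (Y1 k) (1/(k:ℝ)) (hm1 k) (law1 k hk1)] with ω h1 h2 h3 h4
    exact ⟨h1, h2, h3, h4⟩
  -- events
  set A : Set Ω := Y0 m ⁻¹' Set.Ioi t with hA_def
  set B : Set Ω := Y1 m ⁻¹' Set.Iic (t/2) with hB_def
  set C : Set Ω := Y1 m ⁻¹' Set.Iic T with hC_def
  have hmA : MeasurableSet A := (hm0 m) measurableSet_Ioi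
  have hmB : MeasurableSet B := (hm1 m) measurableSet_Iic
  have hmC : MeasurableSet C := (hm1 m) measurableSet_Iic
  have pA : (ℙ A).toReal = Real.exp (-t) := by
    have := law_Ioi (Y0 m) 1 (hm0 m) (law0 m hm1') one_pos t ht0.le
    rwa [one_mul] at this
  have pB : (ℙ B).toReal = 1 - Real.exp (-(1/(m:ℝ) * (t/2))) :=
    law_Iic (Y1 m) (1/(m:ℝ)) (hm1 m) (law1 m hm1') (by positivity) (t/2) (by positivity)
  have pC : (ℙ C).toReal = 1 - Real.exp (-(1/(m:ℝ) * T)) :=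
    law_Iic (Y1 m) (1/(m:ℝ)) (hm1 m) (law1 m hm1') (by positivity) T hT.le
  -- independence
  have hI : IndepFun (Y0 m) (Y1 m) ℙ := by
    have := (hind m hm1').indepFun (i := 0) (j := 1) (by decide)
    simpa using this
  have pAB : (ℙ (A ∩ B)).toReal = Real.exp (-t) * (1 - Real.exp (-(1/(m:ℝ) * (t/2)))) := by
    have := hI.measure_inter_preimage_eq_mul (Set.Ioi t) (Set.Iic (t/2))
      measurableSet_Ioi measurableSet_Iic
    rw [← hA_def, ← hB_def] at this
    rw [this, ENNReal.toReal_mul, pA, pB]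
  -- bounds on Z
  have hDn : ∀ n : ℕ, ∀ ω, 0 ≤ Y0 n ω → 0 ≤ Y1 n ω →
      1 ≤ Z n ω ∧ Z n ω ≤ 1 + n * T := by
    intro n ω h0 h1
    rw [hZ]
    have hvu : min T (min (Y0 n ω) (Y1 n ω)) ≤ min T (Y0 n ω) :=
      min_le_min le_rfl (min_le_left _ _)
    have huT : min T (Y0 n ω) ≤ T := min_le_left _ _
    have hv0 : 0 ≤ min T (min (Y0 n ω) (Y1 n ω)) := le_min hT.le (le_min h0 h1)
    have hn : (0:ℝ) ≤ n := Nat.cast_nonneg n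
    constructor
    · nlinarith
    · nlinarith
  -- pointwise a.e. inequality
  have hpt : ∀ᵐ ω ∂ℙ, (m:ℝ)*(t/2) * (A ∩ B).indicator (fun _ => (1:ℝ)) ω
      - (k:ℝ)*T * C.indicator (fun _ => (1:ℝ)) ω ≤ |Z m ω - Z k ω| := by
    filter_upwards [hae] with ω hω
    obtain ⟨h0m, h1m, h0k, h1k⟩ := hω
    by_cases hC' : ω ∈ C
    · by_cases hAB : ω ∈ A ∩ B
      · have hAm : t < Y0 m ω := hAB.1
        have hBm : Y1 m ω ≤ t/2 := hAB.2
        have hZm : 1 + (m:ℝ)*(t/2) ≤ Z m ω := by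
          rw [hZ]
          have h1' : t ≤ min T (Y0 m ω) := le_min htT hAm.le
          have h2' : min T (min (Y0 m ω) (Y1 m ω)) ≤ t/2 :=
            le_trans (min_le_right _ _) (le_trans (min_le_right _ _) hBm)
          nlinarith
        have hZk := (hDn k ω h0k h1k).2
        rw [Set.indicator_of_mem hAB, Set.indicator_of_mem hC', mul_one, mul_one]
        have : (m:ℝ)*(t/2) - (k:ℝ)*T ≤ Z m ω - Z k ω := by linarith
        exact le_trans this (le_abs_self _)
      · rw [Set.indicator_of_notMem hAB, Set.indicator_of_mem hC', mul_zero, mul_one]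
        have h1' : (0:ℝ) ≤ (k:ℝ)*T := by positivity
        have h2' : (0:ℝ) ≤ |Z m ω - Z k ω| := abs_nonneg _
        linarith
    · have hAB : ω ∉ A ∩ B := by
        intro hmem
        exact hC' (by
          have : Y1 m ω ≤ t/2 := hmem.2
          show Y1 m ω ≤ T
          linarith)
      rw [Set.indicator_of_notMem hAB, Set.indicator_of_notMem hC', mul_zero, mul_zero]
      simpa using abs_nonneg (Z m ω - Z k ω)
  -- integrability
  have hZmeas : ∀ n, Measurable (Z n) := by
    intro n
    have hfn : Z n = fun ω => 1 + (n:ℝ) * (min T (Y0 n ω) - min T (min (Y0 n ω) (Y1 n ω))) :=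
      funext (hZ n)
    rw [hfn]
    fun_prop
  have hintZ : Integrable (fun ω => |Z m ω - Z k ω|) ℙ := by
    apply Integrable.mono' (integrable_const ((m:ℝ)*T + (k:ℝ)*T))
      (((hZmeas m).sub (hZmeas k)).abs.aestronglyMeasurable)
    filter_upwards [hae] with ω hω
    obtain ⟨h0m, h1m, h0k, h1k⟩ := hω
    have h1' := hDn m ω h0m h1m
    have h2' := hDn k ω h0k h1k
    rw [Real.norm_eq_abs, abs_abs, Pi.sub_apply, abs_sub_le_iff]
    constructor <;> nlinarith [h1'.1, h1'.2, h2'.1, h2'.2]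
  have hint1 : Integrable ((A ∩ B).indicator (fun _ => (1:ℝ))) ℙ :=
    (integrable_const (1:ℝ)).indicator (hmA.inter hmB)
  have hint2 : Integrable (C.indicator (fun _ => (1:ℝ))) ℙ :=
    (integrable_const (1:ℝ)).indicator hmC
  have hInt := integral_mono_ae ((hint1.const_mul _).sub (hint2.const_mul _)) hintZ hpt
  have hIval : (∫ ω, ((m:ℝ)*(t/2) * (A ∩ B).indicator (fun _ => (1:ℝ)) ω
      - (k:ℝ)*T * C.indicator (fun _ => (1:ℝ)) ω) ∂ℙ)
      = (m:ℝ)*(t/2) * (ℙ (A ∩ B)).toReal - (k:ℝ)*T * (ℙ C).toReal := by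
    rw [integral_sub (hint1.const_mul _) (hint2.const_mul _), integral_const_mul,
      integral_const_mul, integral_indicator_const (1:ℝ) (hmA.inter hmB),
      integral_indicator_const (1:ℝ) hmC, smul_eq_mul, smul_eq_mul, mul_one, mul_one]
    rfl
  simp only [Pi.sub_apply] at hInt
  rw [hIval] at hInt
  -- numeric estimates
  set x : ℝ := 1/(m:ℝ) * (t/2) with hx_def
  have hx0 : 0 < x := by positivity
  have hx1 : x ≤ 1 := by
    rw [hx_def]
    rw [div_mul_eq_mul_div, one_mul, div_le_one hm0']
    nlinarith
  have hexp : Real.exp (-x) ≤ 1/(1+x) := by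
    rw [le_div_iff₀ (by linarith)]
    have h1' : 1 + x ≤ Real.exp x := by linarith [Real.add_one_le_exp x]
    calc Real.exp (-x) * (1+x) ≤ Real.exp (-x) * Real.exp x := by
          exact mul_le_mul_of_nonneg_left h1' (Real.exp_nonneg _)
      _ = 1 := by rw [← Real.exp_add]; simp
  have hlow : x/2 ≤ 1 - Real.exp (-x) := by
    have h1' : 1/(1+x) ≤ 1 - x/2 := by
      rw [div_le_iff₀ (by linarith)]
      nlinarith
    linarith
  have hmx : (m:ℝ) * x = t/2 := by
    rw [hx_def]; field_simp
  have E1 : c ≤ (m:ℝ)*(t/2) * (ℙ (A ∩ B)).toReal := by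
    rw [pAB]
    have h1' : (m:ℝ)*(t/2) * (Real.exp (-t) * (x/2)) ≤
        (m:ℝ)*(t/2) * (Real.exp (-t) * (1 - Real.exp (-x))) := by
      have h0 : (0:ℝ) ≤ (m:ℝ)*(t/2) := by positivity
      exact mul_le_mul_of_nonneg_left
        (mul_le_mul_of_nonneg_left hlow (Real.exp_nonneg (-t))) h0
    have h2' : (m:ℝ)*(t/2) * (Real.exp (-t) * (x/2)) = c := by
      rw [hc_def]
      have : (m:ℝ)*(t/2) * (Real.exp (-t) * (x/2)) =
          (t/2) * Real.exp (-t) * ((m:ℝ) * x) / 2 := by ring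
      rw [this, hmx]; ring
    linarith
  have E2 : (k:ℝ)*T * (ℙ C).toReal ≤ c/2 := by
    have h1' : (ℙ C).toReal ≤ 1/(m:ℝ) * T := by
      rw [pC]
      linarith [Real.add_one_le_exp (-(1/(m:ℝ) * T))]
    have h0 : (0:ℝ) ≤ (k:ℝ)*T := by positivity
    have h2' : (k:ℝ)*T * (ℙ C).toReal ≤ (k:ℝ)*T * (1/(m:ℝ) * T) :=
      mul_le_mul_of_nonneg_left h1' h0
    have h3' : 2*(k:ℝ)*T^2 ≤ (m:ℝ) * c := by
      have := (div_le_iff₀ hc).mp hmbig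
      linarith
    have h5' : (k:ℝ)*T * (1/(m:ℝ) * T) = ((k:ℝ)*T^2)/(m:ℝ) := by
      field_simp
    have h4' : ((k:ℝ)*T^2)/(m:ℝ) ≤ c/2 := by
      rw [div_le_iff₀ hm0']
      linarith
    linarith
  linarith [hInt, hN', E1, E2]
end
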